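/- Let p > 2 be real and let f_p(t) = p·t^{p-1} + (1-t)^p - t^p for t ∈ [0, 1/2]. Then f_p has a unique critical point t_p in the open interval (0, 1/2) (i.e., f_p'(t_p) = 0 and f_p' vanishes at no other point of (0, 1/2)), and f_p(t_p) is the minimum value of f_p on [0, 1/2]. -/

import Mathlib

open Real Set

/-- Lemma 2, first part: for real `p > 2`, the function
`f_p(t) = p t^(p-1) + (1-t)^p - t^p` has a unique critical point `t_p` in `(0, 1/2)`,
and `f_p(t_p)` is the minimum value of `f_p` on `[0, 1/2]`. -/
theorem stmt9 (p : ℝ) (hp : 2 < p) :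
    ∃ tp ∈ Set.Ioo (0 : ℝ) (1 / 2),
      deriv (fun t : ℝ => p * t ^ (p - 1) + (1 - t) ^ p - t ^ p) tp = 0 ∧
      (∀ s ∈ Set.Ioo (0 : ℝ) (1 / 2),
        deriv (fun t : ℝ => p * t ^ (p - 1) + (1 - t) ^ p - t ^ p) s = 0 → s = tp) ∧
      ∀ s ∈ Set.Icc (0 : ℝ) (1 / 2),
        p * tp ^ (p - 1) + (1 - tp) ^ p - tp ^ p ≤ p * s ^ (p - 1) + (1 - s) ^ p - s ^ p := by
  have hp1 : (1:ℝ) ≤ p - 1 := by linarith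
  have hp0 : (0:ℝ) < p := by linarith
  have hp2 : (0:ℝ) < p - 2 := by linarith
  set f : ℝ → ℝ := fun t : ℝ => p * t ^ (p - 1) + (1 - t) ^ p - t ^ p with hfdef
  set g : ℝ → ℝ := fun t : ℝ => (p-1) * t ^ (p-2) - (1-t) ^ (p-1) - t ^ (p-1) with hgdef
  -- derivative of f everywhere
  have hderiv : ∀ t : ℝ, HasDerivAt f (p * g t) t := by
    intro t
    have h1 : HasDerivAt (fun t : ℝ => t ^ (p-1)) ((p-1) * t ^ (p-1-1)) t :=
      Real.hasDerivAt_rpow_const (Or.inr hp1)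
    have h2' : HasDerivAt (fun x : ℝ => x ^ p) (p * (1-t) ^ (p-1)) (1-t) :=
      Real.hasDerivAt_rpow_const (Or.inr (by linarith))
    have hlin : HasDerivAt (fun t : ℝ => 1 - t) (-1) t := by
      simpa using (hasDerivAt_id' t).const_sub (1:ℝ)
    have h2 : HasDerivAt (fun t : ℝ => (1-t) ^ p) ((p * (1-t) ^ (p-1)) * (-1)) t :=
      h2'.comp t hlin
    have h3 : HasDerivAt (fun t : ℝ => t ^ p) (p * t ^ (p-1)) t :=
      Real.hasDerivAt_rpow_const (Or.inr (by linarith))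
    have := ((h1.const_mul p).add h2).sub h3
    refine this.congr_deriv ?_
    have : p - 1 - 1 = p - 2 := by ring
    rw [hgdef]
    simp only [this]
    ring
  have hderivf : ∀ t : ℝ, deriv f t = p * g t := fun t => (hderiv t).deriv
  -- g is continuous
  have hgc : Continuous g := by
    rw [hgdef]
    apply Continuous.sub
    apply Continuous.sub
    · exact continuous_const.mul (Real.continuous_rpow_const (le_of_lt hp2))
    · exact (Real.continuous_rpow_const (by linarith)).comp (continuous_const.sub continuous_id)
    · exact Real.continuous_rpow_const (by linarith)
  -- derivative of g on positive reals
  have hgderiv : ∀ t ∈ Set.Ioo (0:ℝ) (1/2),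
      HasDerivAt g ((p-1)*(p-2)*t^(p-3) + (p-1)*(1-t)^(p-2) - (p-1)*t^(p-2)) t := by
    intro t ht
    have ht0 : t ≠ 0 := ne_of_gt ht.1
    have h1 : HasDerivAt (fun t : ℝ => t ^ (p-2)) ((p-2) * t ^ (p-2-1)) t :=
      Real.hasDerivAt_rpow_const (Or.inl ht0)
    have h2' : HasDerivAt (fun x : ℝ => x ^ (p-1)) ((p-1) * (1-t) ^ (p-1-1)) (1-t) :=
      Real.hasDerivAt_rpow_const (Or.inr hp1)
    have hlin : HasDerivAt (fun t : ℝ => 1 - t) (-1) t := by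
      simpa using (hasDerivAt_id' t).const_sub (1:ℝ)
    have h2 : HasDerivAt (fun t : ℝ => (1-t) ^ (p-1)) (((p-1) * (1-t) ^ (p-1-1)) * (-1)) t :=
      h2'.comp t hlin
    have h3 : HasDerivAt (fun t : ℝ => t ^ (p-1)) ((p-1) * t ^ (p-1-1)) t :=
      Real.hasDerivAt_rpow_const (Or.inr hp1)
    have := ((h1.const_mul (p-1)).sub h2).sub h3
    refine this.congr_deriv ?_
    have e1 : p - 2 - 1 = p - 3 := by ring
    have e2 : p - 1 - 1 = p - 2 := by ring
    simp only [e1, e2]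
    ring
  -- g strictly increasing on [0, 1/2]
  have hgmono : StrictMonoOn g (Set.Icc (0:ℝ) (1/2)) := by
    apply strictMonoOn_of_deriv_pos (convex_Icc _ _) hgc.continuousOn
    intro x hx
    rw [interior_Icc] at hx
    rw [(hgderiv x hx).deriv]
    have hx0 := hx.1
    have hlt : x ^ (p-2) < (1-x) ^ (p-2) :=
      Real.rpow_lt_rpow (le_of_lt hx0) (by linarith [hx.2]) hp2
    have h1 : 0 < (p-1)*(p-2)*x^(p-3) := by
      apply mul_pos (mul_pos (by linarith) hp2)
      exact Real.rpow_pos_of_pos hx0 _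
    nlinarith [hlt, h1, sub_pos.mpr hlt, mul_pos (show (0:ℝ) < p - 1 by linarith) (sub_pos.mpr hlt)]
  -- values at endpoints
  have hg0 : g 0 = -1 := by
    rw [hgdef]
    simp [Real.zero_rpow (ne_of_gt hp2), Real.zero_rpow (show p - 1 ≠ 0 by linarith),
      Real.one_rpow]
  have hghalf : 0 < g (1/2) := by
    simp only [hgdef]
    have e : (1:ℝ) - 1/2 = 1/2 := by norm_num
    rw [e]
    have h12 : ((1:ℝ)/2) ^ (p-1) = (1/2) ^ (p-2) * (1/2) := by
      rw [show p - 1 = (p-2) + 1 by ring, Real.rpow_add (by norm_num), Real.rpow_one]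
    rw [h12]
    have hpos : 0 < ((1:ℝ)/2) ^ (p-2) := Real.rpow_pos_of_pos (by norm_num) _
    nlinarith
  -- IVT: existence of tp
  have hiv : (0:ℝ) ∈ g '' Set.Ioo 0 (1/2) := by
    apply intermediate_value_Ioo (by norm_num) hgc.continuousOn
    rw [hg0]
    constructor
    · norm_num
    · exact hghalf
  obtain ⟨tp, htp, hgtp⟩ := hiv
  refine ⟨tp, htp, ?_, ?_, ?_⟩
  · rw [hderivf, hgtp, mul_zero]
  · intro s hs hds
    rw [hderivf, mul_eq_zero] at hds
    rcases hds with h | h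
    · exact absurd h (ne_of_gt hp0)
    · have hs' : s ∈ Set.Icc (0:ℝ) (1/2) := Set.mem_Icc.mpr ⟨le_of_lt hs.1, le_of_lt hs.2⟩
      have htp' : tp ∈ Set.Icc (0:ℝ) (1/2) := Set.mem_Icc.mpr ⟨le_of_lt htp.1, le_of_lt htp.2⟩
      exact hgmono.injOn hs' htp' (by rw [h, hgtp])
  · -- minimality
    intro s hs
    have htp' : tp ∈ Set.Icc (0:ℝ) (1/2) := Set.mem_Icc.mpr ⟨le_of_lt htp.1, le_of_lt htp.2⟩
    have hfc : Continuous f := by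
      rw [continuous_iff_continuousAt]
      exact fun t => (hderiv t).continuousAt
    have hanti : StrictAntiOn f (Set.Icc 0 tp) := by
      apply strictAntiOn_of_deriv_neg (convex_Icc _ _) hfc.continuousOn
      intro x hx
      rw [interior_Icc] at hx
      rw [hderivf]
      have hx' : x ∈ Set.Icc (0:ℝ) (1/2) :=
        Set.mem_Icc.mpr ⟨le_of_lt hx.1, le_of_lt (lt_of_lt_of_le hx.2 htp'.2)⟩
      have : g x < g tp := hgmono hx' htp' hx.2
      rw [hgtp] at this
      exact mul_neg_of_pos_of_neg hp0 this
    have hmono : StrictMonoOn f (Set.Icc tp (1/2)) := by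
      apply strictMonoOn_of_deriv_pos (convex_Icc _ _) hfc.continuousOn
      intro x hx
      rw [interior_Icc] at hx
      rw [hderivf]
      have hx' : x ∈ Set.Icc (0:ℝ) (1/2) :=
        Set.mem_Icc.mpr ⟨le_of_lt (lt_trans htp.1 hx.1), le_of_lt hx.2⟩
      have : g tp < g x := hgmono htp' hx' hx.1
      rw [hgtp] at this
      exact mul_pos hp0 this
    show f tp ≤ f s
    rcases lt_trichotomy s tp with h | h | h
    · exact le_of_lt (hanti (Set.mem_Icc.mpr ⟨hs.1, le_of_lt h⟩)
        (Set.mem_Icc.mpr ⟨le_of_lt htp.1, le_refl _⟩) h)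
    · rw [h]
    · exact le_of_lt (hmono (Set.mem_Icc.mpr ⟨le_refl _, le_of_lt htp.2⟩)
        (Set.mem_Icc.mpr ⟨le_of_lt h, hs.2⟩) h)
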